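/- Let A be a commutative ring, B a commutative A-algebra, (I_ρ)_{ρ∈ℕ} an ideal semifiltration of A, x, y ∈ B, and m, n ∈ ℕ. If x is m-integral over (A, (I_ρ)) and y is n-integral over A (in the ring sense), then x·y is (n·m)-integral over (A, (I_ρ)). -/

import Mathlib

open Polynomial

theorem key {R S : Type*} [CommRing R] [Nontrivial R] [CommRing S] (f : R →+* S)
    {ι : Type*} [Fintype ι] [DecidableEq ι]
    (v : ι → S) (u : S) (M : Matrix ι ι R)
    (hv : ∀ i, u * v i = ∑ j, f (M i j) * v j)
    (hs : ∀ w : S, (∀ i, w * v i = 0) → w = 0) :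
    ∃ p : R[X], p.Monic ∧ p.natDegree = Fintype.card ι ∧ Polynomial.eval₂ f u p = 0 := by
  refine ⟨M.charpoly, M.charpoly_monic, M.charpoly_natDegree_eq_dim, ?_⟩
  set N : Matrix ι ι S := u • (1 : Matrix ι ι S) - M.map f with hN
  have hNv : N.mulVec v = 0 := by
    funext i
    simp only [Matrix.mulVec, dotProduct, hN, Matrix.sub_apply, Matrix.smul_apply,
      Matrix.one_apply, Matrix.map_apply, sub_mul, Finset.sum_sub_distrib, smul_eq_mul,
      mul_ite, mul_one, mul_zero, ite_mul, zero_mul, Finset.sum_ite_eq, Finset.mem_univ,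
      if_true, Pi.zero_apply]
    rw [← hv i]
    ring
  have hdetv : ∀ i, N.det * v i = 0 := by
    intro i
    have h2 : N.adjugate.mulVec (N.mulVec v) = N.det • v := by
      rw [Matrix.mulVec_mulVec, Matrix.adjugate_mul, Matrix.smul_mulVec,
        Matrix.one_mulVec]
    rw [hNv, Matrix.mulVec_zero] at h2
    have := congrFun h2.symm i
    simpa [smul_eq_mul] using this
  have hdet : N.det = 0 := hs _ hdetv
  have heq : Polynomial.eval₂ f u M.charpoly = N.det := by
    have h3 := RingHom.map_det (Polynomial.eval₂RingHom f u) (Matrix.charmatrix M)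
    rw [Matrix.charpoly]
    rw [show (Polynomial.eval₂ f u M.charmatrix.det) = (Polynomial.eval₂RingHom f u) M.charmatrix.det from rfl, h3]
    congr 1
    funext i j
    by_cases h : i = j
    · subst h
      simp [Matrix.charmatrix_apply_eq, hN, Matrix.one_apply, smul_eq_mul]
    · simp [Matrix.charmatrix_apply_ne _ _ _ h, hN, Matrix.one_apply, h, smul_eq_mul]
  rw [heq, hdet]

/-- The "Rees-like" subalgebra of `A[X]` attached to an ideal semifiltration. -/
def rees {A : Type*} [CommRing A] (I : ℕ → Ideal A) (hI0 : I 0 = ⊤)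
    (hImul : ∀ a b : ℕ, I a * I b ≤ I (a + b)) : Subalgebra A A[X] where
  carrier := {p | ∀ k, p.coeff k ∈ I k}
  add_mem' := fun {p q} hp hq k => by
    rw [Polynomial.coeff_add]; exact (I k).add_mem (hp k) (hq k)
  mul_mem' := fun {p q} hp hq k => by
    rw [Polynomial.coeff_mul]
    refine Submodule.sum_mem _ fun c hc => ?_
    have h1 := hImul c.1 c.2 (Ideal.mul_mem_mul (hp c.1) (hq c.2))
    rwa [Finset.HasAntidiagonal.mem_antidiagonal.mp hc] at h1
  algebraMap_mem' := fun r k => by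
    simp only [Polynomial.algebraMap_apply, Algebra.algebraMap_self, RingHom.id_apply,
      Polynomial.coeff_C]
    split
    · next h => subst h; rw [hI0]; trivial
    · exact (I k).zero_mem

theorem stmt16 {A B : Type*} [CommRing A] [CommRing B] [Algebra A B] (I : ℕ → Ideal A)
    (hI0 : I 0 = ⊤) (hImul : ∀ a b : ℕ, I a * I b ≤ I (a + b)) (x y : B) (m n : ℕ)
    (hx : ∃ a : ℕ → A, (∑ k ∈ Finset.range (m + 1), algebraMap A B (a k) * x ^ k = 0) ∧
      a m = 1 ∧ ∀ i ≤ m, a i ∈ I (m - i))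
    (hy : ∃ P : A[X], P.Monic ∧ P.natDegree = n ∧ aeval y P = 0) :
    ∃ a : ℕ → A, (∑ k ∈ Finset.range (n * m + 1), algebraMap A B (a k) * (x * y) ^ k = 0) ∧
      a (n * m) = 1 ∧ ∀ i ≤ n * m, a i ∈ I (n * m - i) := by
  obtain ⟨a, hax, ham, haI⟩ := hx
  obtain ⟨P, hPm, hPd, hPy⟩ := hy
  by_cases hB1 : (1 : B) = 0
  · haveI : Subsingleton B := subsingleton_of_zero_eq_one hB1.symm
    refine ⟨fun i => if i = n * m then 1 else 0, Subsingleton.elim _ _, by simp, ?_⟩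
    intro i _
    by_cases h : i = n * m
    · subst h; simp [hI0]
    · simpa only [if_neg h] using (I _).zero_mem
  haveI hBnt : Nontrivial B := nontrivial_of_ne 1 0 hB1
  haveI hAnt : Nontrivial A := (algebraMap A B).domain_nontrivial
  -- m and n are positive
  have hm0 : m ≠ 0 := by
    rintro rfl
    rw [Finset.range_one, Finset.sum_singleton, ham, pow_zero, map_one, one_mul] at hax
    exact hB1 hax
  have hn0 : n ≠ 0 := by
    rintro rfl
    have : P = 1 := hPm.natDegree_eq_zero.mp hPd
    rw [this, map_one] at hPy
    exact hB1 hPy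
  -- relation for y
  have hyrel : y ^ n = ∑ l ∈ Finset.range n, algebraMap A B (-(P.coeff l)) * y ^ l := by
    have h2 : P.coeff n = 1 := hPd ▸ hPm.coeff_natDegree
    have h1 : ∑ i ∈ Finset.range n, algebraMap A B (P.coeff i) * y ^ i + y ^ n = 0 := by
      have h0 := Polynomial.aeval_eq_sum_range' (p := P) (x := y) (by omega : P.natDegree < n + 1)
      rw [hPy, Finset.sum_range_succ, h2, one_smul] at h0
      simp only [Algebra.smul_def] at h0
      exact h0.symm
    have h3 := eq_neg_of_add_eq_zero_right h1
    rw [h3, ← Finset.sum_neg_distrib]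
    exact Finset.sum_congr rfl fun l _ => by rw [map_neg, neg_mul]
  -- relation for x
  have hxrel : x ^ m = ∑ k ∈ Finset.range m, algebraMap A B (-(a k)) * x ^ k := by
    rw [Finset.sum_range_succ, ham, map_one, one_mul] at hax
    have h3 := eq_neg_of_add_eq_zero_right hax
    rw [h3, ← Finset.sum_neg_distrib]
    exact Finset.sum_congr rfl fun l _ => by rw [map_neg, neg_mul]
  -- setup of the Rees algebra
  set R : Subalgebra A A[X] := rees I hI0 hImul with hR
  haveI : Nontrivial R := ⟨⟨1, 0, fun h => one_ne_zero (congrArg Subtype.val h : (1 : A[X]) = 0)⟩⟩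
  let f : R →+* B[X] := (Polynomial.mapRingHom (algebraMap A B)).comp R.val.toRingHom
  have hfC : ∀ r : A, f (algebraMap A R r) = Polynomial.C (algebraMap A B r) := by
    intro r
    show Polynomial.map (algebraMap A B) (algebraMap A A[X] r) = _
    rw [Polynomial.algebraMap_apply, Polynomial.map_C]
    simp
  have memx : ∀ k : ℕ, k < m →
      (Polynomial.C (-(a k)) * Polynomial.X ^ (m - k) : A[X]) ∈ R := by
    intro k hk t
    rw [Polynomial.coeff_C_mul, Polynomial.coeff_X_pow]
    by_cases h : t = m - k
    · rw [if_pos h, mul_one, h]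
      exact (I (m - k)).neg_mem (haI k hk.le)
    · rw [if_neg h, mul_zero]; exact (I t).zero_mem
  let Ax : Fin m → ℕ → R := fun i k =>
    if h : k < m then
      (if (i : ℕ) + 1 = m then ⟨Polynomial.C (-(a k)) * Polynomial.X ^ (m - k), memx k h⟩
       else (if k = (i : ℕ) + 1 then 1 else 0))
    else 0
  let By : Fin n → ℕ → R := fun j l =>
    if (j : ℕ) + 1 = n then algebraMap A R (-(P.coeff l))
    else (if l = (j : ℕ) + 1 then 1 else 0)
  let v : Fin n × Fin m → B[X] := fun p =>
    Polynomial.C (x ^ (p.2 : ℕ) * y ^ (p.1 : ℕ)) * Polynomial.X ^ (p.2 : ℕ)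
  let u : B[X] := Polynomial.C (x * y) * Polynomial.X
  let M : Matrix (Fin n × Fin m) (Fin n × Fin m) R := fun p q =>
    By p.1 (q.1 : ℕ) * Ax p.2 (q.2 : ℕ)
  -- step lemma for x
  have stepx : ∀ i : Fin m, Polynomial.C x * Polynomial.X *
      (Polynomial.C (x ^ (i : ℕ)) * Polynomial.X ^ (i : ℕ)) =
      ∑ k ∈ Finset.range m, f (Ax i k) * (Polynomial.C (x ^ k) * Polynomial.X ^ k) := by
    intro i
    have hL : Polynomial.C x * Polynomial.X *
        (Polynomial.C (x ^ (i : ℕ)) * Polynomial.X ^ (i : ℕ)) =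
        Polynomial.C (x ^ ((i : ℕ) + 1)) * Polynomial.X ^ ((i : ℕ) + 1) := by
      rw [pow_succ, pow_succ, Polynomial.C_mul]; ring
    rw [hL]
    by_cases h : (i : ℕ) + 1 = m
    · rw [h]
      rw [hxrel, map_sum, Finset.sum_mul]
      refine Finset.sum_congr rfl fun k hk => ?_
      have hkm : k < m := Finset.mem_range.mp hk
      have hAx : Ax i k = ⟨Polynomial.C (-(a k)) * Polynomial.X ^ (m - k), memx k hkm⟩ := by
        simp only [Ax, dif_pos hkm, if_pos h]
      rw [hAx]
      have hfv : f (⟨Polynomial.C (-(a k)) * Polynomial.X ^ (m - k), memx k hkm⟩ : R) =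
          Polynomial.C (algebraMap A B (-(a k))) * Polynomial.X ^ (m - k) := by
        show Polynomial.map (algebraMap A B)
          (Polynomial.C (-(a k)) * Polynomial.X ^ (m - k)) = _
        rw [Polynomial.map_mul, Polynomial.map_C, Polynomial.map_pow, Polynomial.map_X]
      rw [hfv]
      have hX : (Polynomial.X : B[X]) ^ (m - k) * Polynomial.X ^ k = Polynomial.X ^ m := by
        rw [← pow_add, Nat.sub_add_cancel hkm.le]
      calc Polynomial.C (algebraMap A B (-(a k)) * x ^ k) * Polynomial.X ^ m
          = Polynomial.C (algebraMap A B (-(a k))) * Polynomial.C (x ^ k) *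
            (Polynomial.X ^ (m - k) * Polynomial.X ^ k) := by rw [Polynomial.C_mul, hX]
        _ = Polynomial.C (algebraMap A B (-(a k))) * Polynomial.X ^ (m - k) *
            (Polynomial.C (x ^ k) * Polynomial.X ^ k) := by ring
    · have him : (i : ℕ) + 1 < m := lt_of_le_of_ne i.isLt h
      have hAx : ∀ k ∈ Finset.range m, f (Ax i k) * (Polynomial.C (x ^ k) * Polynomial.X ^ k)
          = if k = (i : ℕ) + 1 then Polynomial.C (x ^ k) * Polynomial.X ^ k else 0 := by
        intro k hk
        have hkm : k < m := Finset.mem_range.mp hk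
        simp only [Ax, dif_pos hkm, if_neg h]
        by_cases hki : k = (i : ℕ) + 1
        · rw [if_pos hki, if_pos hki, map_one, one_mul]
        · rw [if_neg hki, if_neg hki, map_zero, zero_mul]
      rw [Finset.sum_congr rfl hAx, Finset.sum_ite_eq' (Finset.range m)]
      rw [if_pos (Finset.mem_range.mpr him)]
  -- step lemma for y
  have stepy : ∀ j : Fin n, Polynomial.C y * Polynomial.C (y ^ (j : ℕ)) =
      ∑ l ∈ Finset.range n, f (By j l) * Polynomial.C (y ^ l) := by
    intro j
    have hL : Polynomial.C y * Polynomial.C (y ^ (j : ℕ)) =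
        Polynomial.C (y ^ ((j : ℕ) + 1)) := by
      rw [← Polynomial.C_mul, ← pow_succ']
    rw [hL]
    by_cases h : (j : ℕ) + 1 = n
    · rw [h, hyrel, map_sum]
      refine Finset.sum_congr rfl fun l _ => ?_
      have hBy : By j l = algebraMap A R (-(P.coeff l)) := if_pos h
      rw [Polynomial.C_mul, hBy, hfC]
    · have hjn : (j : ℕ) + 1 < n := lt_of_le_of_ne j.isLt h
      have hBy : ∀ l ∈ Finset.range n, f (By j l) * Polynomial.C (y ^ l)
          = if l = (j : ℕ) + 1 then Polynomial.C (y ^ l) else 0 := by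
        intro l hl
        simp only [By, if_neg h]
        by_cases hlj : l = (j : ℕ) + 1
        · rw [if_pos hlj, if_pos hlj, map_one, one_mul]
        · rw [if_neg hlj, if_neg hlj, map_zero, zero_mul]
      rw [Finset.sum_congr rfl hBy, Finset.sum_ite_eq' (Finset.range n),
        if_pos (Finset.mem_range.mpr hjn)]
  -- the matrix relation
  have hv : ∀ p : Fin n × Fin m, u * v p = ∑ q : Fin n × Fin m, f (M p q) * v q := by
    rintro ⟨j, i⟩
    have h1 : u * v (j, i) = (Polynomial.C x * Polynomial.X *
        (Polynomial.C (x ^ (i : ℕ)) * Polynomial.X ^ (i : ℕ))) *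
        (Polynomial.C y * Polynomial.C (y ^ (j : ℕ))) := by
      show Polynomial.C (x * y) * Polynomial.X *
        (Polynomial.C (x ^ (i : ℕ) * y ^ (j : ℕ)) * Polynomial.X ^ (i : ℕ)) = _
      rw [Polynomial.C_mul, Polynomial.C_mul]
      ring
    have hRHS : (∑ q : Fin n × Fin m, f (M (j, i) q) * v q)
        = ∑ l ∈ Finset.range n, ∑ k ∈ Finset.range m,
          f (By j l * Ax i k) * (Polynomial.C (x ^ k * y ^ l) * Polynomial.X ^ k) := by
      rw [Fintype.sum_prod_type]
      rw [Fin.sum_univ_eq_sum_range (fun l => ∑ k : Fin m, f (By j l * Ax i (k : ℕ)) *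
        (Polynomial.C (x ^ (k : ℕ) * y ^ l) * Polynomial.X ^ (k : ℕ))) n]
      refine Finset.sum_congr rfl fun l _ => ?_
      exact Fin.sum_univ_eq_sum_range (fun k => f (By j l * Ax i k) *
        (Polynomial.C (x ^ k * y ^ l) * Polynomial.X ^ k)) m
    rw [h1, stepx i, stepy j, Finset.sum_mul_sum, hRHS, Finset.sum_comm]
    refine Finset.sum_congr rfl fun k _ => Finset.sum_congr rfl fun l _ => ?_
    rw [map_mul, Polynomial.C_mul]
    ring
  -- the spanning condition
  have hs : ∀ w : B[X], (∀ p : Fin n × Fin m, w * v p = 0) → w = 0 := by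
    intro w hw
    have h00 := hw (⟨0, Nat.pos_of_ne_zero hn0⟩, ⟨0, Nat.pos_of_ne_zero hm0⟩)
    simpa [v] using h00
  -- apply the key lemma
  obtain ⟨p, hpm, hpd, hpe⟩ := key f v u M hv hs
  have hcard : Fintype.card (Fin n × Fin m) = n * m := by simp
  rw [hcard] at hpd
  rw [Polynomial.eval₂_eq_sum_range, hpd] at hpe
  have hmem : ∀ z : R, ∀ k, (z : A[X]).coeff k ∈ I k := fun z => z.2
  refine ⟨fun i => ((p.coeff i : R) : A[X]).coeff (n * m - i), ?_, ?_, ?_⟩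
  · have hterm : ∀ i ∈ Finset.range (n * m + 1),
        (f (p.coeff i) * u ^ i).coeff (n * m)
        = algebraMap A B (((p.coeff i : R) : A[X]).coeff (n * m - i)) * (x * y) ^ i := by
      intro i hi
      have hi' : i ≤ n * m := Nat.lt_succ_iff.mp (Finset.mem_range.mp hi)
      have hu : u ^ i = Polynomial.C ((x * y) ^ i) * Polynomial.X ^ i := by
        show (Polynomial.C (x * y) * Polynomial.X) ^ i = _
        rw [mul_pow, Polynomial.C_pow]
      rw [hu, ← mul_assoc, Polynomial.coeff_mul_X_pow', if_pos hi', Polynomial.coeff_mul_C]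
      congr 1
      show (Polynomial.map (algebraMap A B) ((p.coeff i : R) : A[X])).coeff (n * m - i) = _
      rw [Polynomial.coeff_map]
    calc ∑ k ∈ Finset.range (n * m + 1),
          algebraMap A B (((p.coeff k : R) : A[X]).coeff (n * m - k)) * (x * y) ^ k
        = ∑ k ∈ Finset.range (n * m + 1), (f (p.coeff k) * u ^ k).coeff (n * m) :=
          (Finset.sum_congr rfl hterm).symm
      _ = (∑ k ∈ Finset.range (n * m + 1), f (p.coeff k) * u ^ k).coeff (n * m) :=
          (Polynomial.finset_sum_coeff _ _ _).symm
      _ = 0 := by rw [hpe, Polynomial.coeff_zero]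
  · have h1 : p.coeff (n * m) = 1 := by rw [← hpd]; exact hpm.coeff_natDegree
    show ((p.coeff (n * m) : R) : A[X]).coeff (n * m - (n * m)) = 1
    rw [h1]
    simp
  · intro i _
    exact hmem _ _
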